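/- There exists a constant C > 0 such that for every a ∈ 𝔻, every 0 < ρ ≤ 1/2 with E(a,ρ) ⊂ 𝔻, every nonnegative integer n, every f analytic on 𝔻, and every z ∈ E(a, ρ/2): |f^{(n)}(z) - f^{(n)}(a)| ≤ C · |z - a| / (ρ(1-|a|)) · (1/A(E(a,ρ))) · ∫_{E(a,ρ)} |f^{(n)}(u)| dA(u). -/

import Mathlib

open Complex MeasureTheory Real Set Metric ComplexConjugate

/-- Euclidean disk `E(a,ρ) = {z ∈ 𝔻 : |z-a| < ρ(1-|a|²)}`. -/
def eDisk (a : ℂ) (ρ : ℝ) : Set ℂ :=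
  {z ∈ Metric.ball (0:ℂ) 1 | ‖z - a‖ < ρ * (1 - ‖a‖^2)}

/-- Lebesgue area measure of a planar set. -/
noncomputable def area (S : Set ℂ) : ℝ := (MeasureTheory.volume S).toReal

lemma circle_mean_norm {g : ℂ → ℂ} {w : ℂ} {r : ℝ} (hr : 0 < r)
    (hg : DiffContOnCl ℂ g (Metric.ball w r)) :
    2 * π * ‖g w‖ ≤ ∫ θ in (0:ℝ)..(2*π), ‖g (circleMap w r θ)‖ := by
  have h := hg.circleIntegral_sub_inv_smul (Metric.mem_ball_self hr)
  have h2 : (∮ z in C(w, r), (z - w)⁻¹ • g z)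
      = ∫ θ in (0:ℝ)..(2*π), I * g (circleMap w r θ) := by
    simp only [circleIntegral, deriv_circleMap, circleMap_sub_center, smul_eq_mul]
    congr 1
    ext θ
    rw [mul_mul_mul_comm, mul_inv_cancel₀ (circleMap_ne_center hr.ne'), one_mul]
  rw [h2] at h
  have h3 : ‖∫ θ in (0:ℝ)..(2*π), I * g (circleMap w r θ)‖ = 2 * π * ‖g w‖ := by
    rw [h, norm_smul]
    simp [Complex.norm_I, abs_of_pos Real.pi_pos]
  rw [← h3]
  refine le_trans (intervalIntegral.norm_integral_le_integral_norm (by positivity)) ?_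
  apply le_of_eq
  congr 1
  ext θ
  simp [norm_mul]

lemma csym (w : ℂ) (r θ : ℝ) :
    w + Complex.polarCoord.symm (r, θ) = circleMap w r θ := by
  simp [circleMap, Complex.exp_mul_I, ← Complex.ofReal_cos, ← Complex.ofReal_sin]

lemma submean {g : ℂ → ℂ} {w : ℂ} {s : ℝ} (hs : 0 < s)
    (hg : DifferentiableOn ℂ g (Metric.closedBall w s)) :
    π * s ^ 2 * ‖g w‖ ≤ ∫ u in Metric.ball w s, ‖g u‖ := by
  have hgc : ContinuousOn (fun u => ‖g u‖) (Metric.closedBall w s) := hg.continuousOn.norm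
  set F : ℝ × ℝ → ℝ := fun p => p.1 * ‖g (w + Complex.polarCoord.symm p)‖ with hF
  have hFc : ContinuousOn F (Icc 0 s ×ˢ Icc (-π) π) := by
    apply ContinuousOn.mul (continuous_fst.continuousOn)
    apply ContinuousOn.norm
    apply hg.continuousOn.comp
    · apply Continuous.continuousOn
      have : Continuous fun p : ℝ × ℝ => Complex.polarCoord.symm p := by
        simp only [Complex.polarCoord_symm_apply]
        fun_prop
      fun_prop
    · intro p hp
      simp only [Metric.mem_closedBall, dist_eq_norm, add_sub_cancel_left]
      rw [show ‖Complex.polarCoord.symm p‖ = |p.1| from Complex.norm_polarCoord_symm p]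
      rw [_root_.abs_of_nonneg hp.1.1]
      exact hp.1.2
  have hFint : IntegrableOn F (Ioo 0 s ×ˢ Ioo (-π) π) := by
    apply (hFc.integrableOn_compact (isCompact_Icc.prod isCompact_Icc)).mono_set
    exact Set.prod_mono Ioo_subset_Icc_self Ioo_subset_Icc_self
  -- translation
  have e1 : ∫ u in Metric.ball w s, ‖g u‖ = ∫ u in Metric.ball (0:ℂ) s, ‖g (w + u)‖ := by
    rw [← MeasureTheory.integral_indicator measurableSet_ball,
      ← MeasureTheory.integral_indicator measurableSet_ball,
      ← MeasureTheory.integral_add_left_eq_self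
        ((Metric.ball w s).indicator fun u => ‖g u‖) w]
    congr 1
    ext u
    by_cases h : u ∈ Metric.ball (0:ℂ) s
    · have h' : w + u ∈ Metric.ball w s := by
        simpa [Metric.mem_ball, dist_eq_norm] using h
      simp [Set.indicator_of_mem h, Set.indicator_of_mem h']
    · have h' : w + u ∉ Metric.ball w s := by
        simpa [Metric.mem_ball, dist_eq_norm] using h
      simp [Set.indicator_of_notMem h, Set.indicator_of_notMem h']
  -- polar coordinates
  have e2 := Complex.integral_comp_polarCoord_symm
      ((Metric.ball (0:ℂ) s).indicator fun u => ‖g (w + u)‖)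
  rw [MeasureTheory.integral_indicator measurableSet_ball] at e2
  -- identify the LHS of e2 with the integral of F over the rectangle
  have e3 : (∫ p in polarCoord.target,
        p.1 • ((Metric.ball (0:ℂ) s).indicator fun u => ‖g (w + u)‖)
          (Complex.polarCoord.symm p))
      = ∫ p in Ioo 0 s ×ˢ Ioo (-π) π, F p := by
    rw [← MeasureTheory.integral_indicator (polarCoord.open_target.measurableSet),
      ← MeasureTheory.integral_indicator (measurableSet_Ioo.prod measurableSet_Ioo)]
    congr 1
    ext p
    rw [show polarCoord.target = Ioi (0:ℝ) ×ˢ Ioo (-π) π from rfl]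
    by_cases h1 : p ∈ Ioi (0:ℝ) ×ˢ Ioo (-π) π
    · have hp1 : 0 < p.1 := h1.1
      by_cases h2 : p.1 < s
      · have hb : Complex.polarCoord.symm p ∈ Metric.ball (0:ℂ) s := by
          rw [mem_ball_zero_iff,
            show ‖Complex.polarCoord.symm p‖ = |p.1| from Complex.norm_polarCoord_symm p,
            _root_.abs_of_pos hp1]
          exact h2
        have hmem : p ∈ Ioo (0:ℝ) s ×ˢ Ioo (-π) π := ⟨⟨hp1, h2⟩, h1.2⟩
        rw [Set.indicator_of_mem h1, Set.indicator_of_mem hmem, Set.indicator_of_mem hb]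
        simp [hF]
      · have hb : Complex.polarCoord.symm p ∉ Metric.ball (0:ℂ) s := by
          rw [mem_ball_zero_iff,
            show ‖Complex.polarCoord.symm p‖ = |p.1| from Complex.norm_polarCoord_symm p,
            _root_.abs_of_pos hp1]
          exact h2
        have hmem : p ∉ Ioo (0:ℝ) s ×ˢ Ioo (-π) π := fun hc => h2 hc.1.2
        rw [Set.indicator_of_mem h1, Set.indicator_of_notMem hmem,
          Set.indicator_of_notMem hb]
        simp
    · have hmem : p ∉ Ioo (0:ℝ) s ×ˢ Ioo (-π) π := fun hc => h1 ⟨hc.1.1, hc.2⟩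
      rw [Set.indicator_of_notMem h1, Set.indicator_of_notMem hmem]
  -- Fubini
  have hFint' : Integrable F ((volume.restrict (Ioo 0 s)).prod (volume.restrict (Ioo (-π) π))) := by
    rw [Measure.prod_restrict, ← MeasureTheory.Measure.volume_eq_prod]
    exact hFint
  have e4 : ∫ p in Ioo 0 s ×ˢ Ioo (-π) π, F p
      = ∫ r in Ioo 0 s, ∫ θ in Ioo (-π) π, F (r, θ) := by
    rw [MeasureTheory.Measure.volume_eq_prod]
    apply MeasureTheory.setIntegral_prod
    rwa [Measure.prod_restrict] at hFint'
  have hmarg : IntegrableOn (fun r => ∫ θ in Ioo (-π) π, F (r, θ)) (Ioo 0 s) :=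
    hFint'.integral_prod_left
  -- pointwise lower bound
  have hpt : ∀ r ∈ Ioo (0:ℝ) s, 2 * π * ‖g w‖ * r ≤ ∫ θ in Ioo (-π) π, F (r, θ) := by
    intro r hr
    have hdc : DiffContOnCl ℂ g (Metric.ball w r) :=
      ⟨hg.mono (Metric.ball_subset_closedBall.trans
          (Metric.closedBall_subset_closedBall hr.2.le)),
        hg.continuousOn.mono ((closure_ball w hr.1.ne').symm ▸
          (Metric.closedBall_subset_closedBall hr.2.le : Metric.closedBall w r ⊆ _))⟩
    have hm := circle_mean_norm hr.1 hdc
    have hper : Function.Periodic (fun θ => ‖g (circleMap w r θ)‖) (2*π) := by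
      intro θ
      simp [periodic_circleMap w r θ]
    have hshift : (∫ θ in (-π)..(-π + 2*π), ‖g (circleMap w r θ)‖)
        = ∫ θ in (0:ℝ)..(0 + 2*π), ‖g (circleMap w r θ)‖ :=
      hper.intervalIntegral_add_eq (-π) 0
    have e5 : (∫ θ in Ioo (-π) π, F (r, θ)) = r * ∫ θ in (0:ℝ)..(2*π), ‖g (circleMap w r θ)‖ := by
      have : (∫ θ in Ioo (-π) π, F (r, θ)) = ∫ θ in Ioo (-π) π, r * ‖g (circleMap w r θ)‖ := by
        apply setIntegral_congr_fun measurableSet_Ioo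
        intro θ _
        simp only [hF, csym]
      rw [this, MeasureTheory.integral_const_mul]
      congr 1
      rw [show -π + 2*π = π by ring, zero_add] at hshift
      rw [← MeasureTheory.integral_Ioc_eq_integral_Ioo,
        ← intervalIntegral.integral_of_le (by linarith [Real.pi_pos] : (-π:ℝ) ≤ π), hshift]
    rw [e5, mul_comm r]
    exact mul_le_mul_of_nonneg_right hm hr.1.le
  -- assemble
  have hid : ∫ r in Ioo (0:ℝ) s, r = s ^ 2 / 2 := by
    rw [← MeasureTheory.integral_Ioc_eq_integral_Ioo,
      ← intervalIntegral.integral_of_le hs.le]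
    simpa using intervalIntegral.integral_id (a := (0:ℝ)) (b := s)
  have lower : π * s ^ 2 * ‖g w‖ = ∫ r in Ioo (0:ℝ) s, 2 * π * ‖g w‖ * r := by
    rw [MeasureTheory.integral_const_mul, hid]
    ring
  have hconst : IntegrableOn (fun r => 2 * π * ‖g w‖ * r) (Ioo (0:ℝ) s) := by
    have : ContinuousOn (fun r : ℝ => 2 * π * ‖g w‖ * r) (Icc (0:ℝ) s) := by fun_prop
    exact (this.integrableOn_compact isCompact_Icc).mono_set Ioo_subset_Icc_self
  calc π * s ^ 2 * ‖g w‖ = ∫ r in Ioo (0:ℝ) s, 2 * π * ‖g w‖ * r := lower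
    _ ≤ ∫ r in Ioo (0:ℝ) s, ∫ θ in Ioo (-π) π, F (r, θ) :=
        MeasureTheory.setIntegral_mono_on hconst hmarg measurableSet_Ioo hpt
    _ = ∫ p in Ioo 0 s ×ˢ Ioo (-π) π, F p := e4.symm
    _ = ∫ u in Metric.ball w s, ‖g u‖ := by rw [← e3, e2, ← e1]

theorem stmt7 :
    ∃ C > 0, ∀ a ∈ Metric.ball (0:ℂ) 1, ∀ ρ : ℝ, 0 < ρ → ρ ≤ 1/2 →
      Metric.ball a (ρ * (1 - ‖a‖^2)) ⊆ Metric.ball (0:ℂ) 1 →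
      ∀ n : ℕ, ∀ f : ℂ → ℂ, DifferentiableOn ℂ f (Metric.ball 0 1) →
      ∀ z ∈ eDisk a (ρ/2),
        ‖iteratedDeriv n f z - iteratedDeriv n f a‖
          ≤ C * (‖z - a‖ / (ρ * (1 - ‖a‖))) *
              ((∫ u in eDisk a ρ, ‖iteratedDeriv n f u‖) / area (eDisk a ρ)) := by
  refine ⟨64, by norm_num, ?_⟩
  intro a ha ρ hρ hρ2 hball n f hf z hz
  set g := iteratedDeriv n f with hgdef
  have hna : ‖a‖ < 1 := by simpa using ha
  have h1a : 0 < 1 - ‖a‖ := by linarith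
  have h1a2 : 0 < 1 - ‖a‖^2 := by nlinarith [norm_nonneg a]
  set R := ρ * (1 - ‖a‖^2) with hR
  have hRpos : 0 < R := by positivity
  have hsub : Metric.closedBall a R ⊆ Metric.ball 0 1 := by
    intro x hx
    rw [Metric.mem_closedBall, dist_eq_norm] at hx
    rw [Metric.mem_ball, dist_zero_right]
    have h2 : ‖x‖ - ‖a‖ ≤ ‖x - a‖ := norm_sub_norm_le x a
    nlinarith [norm_nonneg a]
  have hE : eDisk a ρ = Metric.ball a R := by
    ext u
    constructor
    · rintro ⟨_, h⟩; exact mem_ball_iff_norm.2 h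
    · intro h; exact ⟨hball h, mem_ball_iff_norm.1 h⟩
  have hhalf : ρ/2 * (1 - ‖a‖^2) = R/2 := by rw [hR]; ring
  have hsub2 : Metric.ball a (R/2) ⊆ Metric.ball (0:ℂ) 1 :=
    (Metric.ball_subset_ball (by linarith)).trans hball
  have hE2 : eDisk a (ρ/2) = Metric.ball a (R/2) := by
    ext u
    constructor
    · rintro ⟨_, h⟩; rw [hhalf] at h; exact mem_ball_iff_norm.2 h
    · intro h; exact ⟨hsub2 h, by rw [hhalf]; exact mem_ball_iff_norm.1 h⟩
  have hg : DifferentiableOn ℂ g (Metric.ball 0 1) := by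
    have h1 : AnalyticOnNhd ℂ f (Metric.ball 0 1) := hf.analyticOnNhd Metric.isOpen_ball
    have h2 := h1.iterated_deriv n
    rw [hgdef, iteratedDeriv_eq_iterate]
    exact h2.differentiableOn
  set Itg := ∫ u in Metric.ball a R, ‖g u‖ with hItg
  have hItgnn : 0 ≤ Itg := integral_nonneg fun u => norm_nonneg _
  have hint : IntegrableOn (fun u => ‖g u‖) (Metric.ball a R) := by
    exact (((hg.continuousOn.mono hsub).norm.integrableOn_compact
      (isCompact_closedBall a R)).mono_set Metric.ball_subset_closedBall)
  have hspos : 0 < R/4 := by positivity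
  have hMbound : ∀ w ∈ Metric.ball a (R/2), ‖deriv g w‖ ≤ 64 / (π * R^3) * Itg := by
    intro w hw
    rw [Metric.mem_ball, dist_eq_norm] at hw
    have hcbw : Metric.closedBall w (R/2) ⊆ Metric.ball a R := by
      intro x hx
      rw [Metric.mem_closedBall, dist_eq_norm] at hx
      rw [Metric.mem_ball, dist_eq_norm]
      have hxa : x - a = (x - w) + (w - a) := by ring
      calc ‖x - a‖ ≤ ‖x - w‖ + ‖w - a‖ := by rw [hxa]; exact norm_add_le _ _
        _ < R := by linarith
    have hsphere : ∀ ζ ∈ Metric.sphere w (R/4), ‖g ζ‖ ≤ 16 / (π * R^2) * Itg := by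
      intro ζ hζ
      rw [Metric.mem_sphere, dist_eq_norm] at hζ
      have hcb : Metric.closedBall ζ (R/4) ⊆ Metric.ball a R := by
        intro x hx
        rw [Metric.mem_closedBall, dist_eq_norm] at hx
        rw [Metric.mem_ball, dist_eq_norm]
        have hxa : x - a = (x - ζ) + (ζ - w) + (w - a) := by ring
        calc ‖x - a‖ ≤ ‖x - ζ‖ + ‖ζ - w‖ + ‖w - a‖ := by
              rw [hxa]; exact norm_add₃_le
          _ < R := by rw [hζ]; linarith
      have hsm := submean hspos (hg.mono (hcb.trans (Metric.ball_subset_closedBall.trans hsub)))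
      have hmono : ∫ u in Metric.ball ζ (R/4), ‖g u‖ ≤ Itg := by
        apply setIntegral_mono_set hint
        · exact Filter.Eventually.of_forall fun u => norm_nonneg _
        · exact HasSubset.Subset.eventuallyLE (Metric.ball_subset_closedBall.trans hcb)
      have hc : π * (R/4)^2 * ‖g ζ‖ ≤ Itg := le_trans hsm hmono
      rw [show (16:ℝ) / (π * R^2) * Itg = Itg / (π * (R/4)^2) by field_simp; ring]
      rw [le_div_iff₀ (by positivity)]
      nlinarith [hc]
    have hdc : DiffContOnCl ℂ g (Metric.ball w (R/4)) := by
      have hss : Metric.closedBall w (R/4) ⊆ Metric.ball (0:ℂ) 1 :=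
        (Metric.closedBall_subset_closedBall (by linarith : R/4 ≤ R/2)).trans
          (hcbw.trans (Metric.ball_subset_closedBall.trans hsub))
      refine ⟨hg.mono (Metric.ball_subset_closedBall.trans hss), ?_⟩
      apply hg.continuousOn.mono
      rw [closure_ball w hspos.ne']
      exact hss
    have hcd := Complex.norm_deriv_le_of_forall_mem_sphere_norm_le hspos hdc hsphere
    calc ‖deriv g w‖ ≤ (16 / (π * R^2) * Itg) / (R/4) := hcd
      _ = 64 / (π * R^3) * Itg := by field_simp; ring
  have hz' : z ∈ Metric.ball a (R/2) := by rw [hE2] at hz; exact hz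
  have hdiff : ∀ x ∈ Metric.ball a (R/2), DifferentiableAt ℂ g x := fun x hx =>
    hg.differentiableAt (Metric.isOpen_ball.mem_nhds (hsub2 hx))
  have hmvt := (convex_ball a (R/2)).norm_image_sub_le_of_norm_deriv_le hdiff hMbound
    (Metric.mem_ball_self (by positivity)) hz'
  have harea : area (eDisk a ρ) = R^2 * π := by
    rw [hE, area, Complex.volume_ball]
    rw [ENNReal.toReal_mul, ENNReal.toReal_pow, ENNReal.toReal_ofReal hRpos.le]
    norm_num [← NNReal.coe_real_pi]
  rw [harea, hE]
  set P := ρ * (1 - ‖a‖) with hP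
  have hPpos : 0 < P := by positivity
  have hPR : P ≤ R := by
    rw [hP, hR]
    nlinarith [norm_nonneg a]
  set d := ‖z - a‖ with hd
  have hdnn : 0 ≤ d := norm_nonneg _
  clear_value R P d Itg
  rw [← hItg]
  calc ‖g z - g a‖ ≤ 64 / (π * R^3) * Itg * d := hmvt
    _ ≤ 64 * (d / P) * (Itg / (R^2 * π)) := by
        rw [show 64 / (π * R^3) * Itg * d = 64 * Itg * d / (π * R^3) by ring,
          show 64 * (d / P) * (Itg / (R^2 * π)) = 64 * d * Itg / (P * (R^2 * π)) by ring]
        rw [div_le_div_iff₀ (by positivity) (by positivity)]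
        nlinarith [mul_nonneg (mul_nonneg hItgnn hdnn)
          (mul_nonneg (mul_nonneg Real.pi_pos.le (sq_nonneg R)) (sub_nonneg.2 hPR))]
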